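/- Under the ellipsoidal-coordinate setup, assume in addition that reals c_1, …, c_{n−1} are given, that for every t ∈ I each λ_k(t) is nonzero, that w_1, …, w_n : I → ℝ satisfy w_k(t)² = −λ_k(t) · ∏_{i=1}^{n+1}(λ_k(t) − a_i) · ∏_{l=1}^{n−1}(λ_k(t) − c_l), and that the Dubrovin equations hold: λ̇_k(t) = −2 w_k(t) / ( λ_k(t) · ∏_{j≠k}(λ_k(t) − λ_j(t)) ) for every k and t. Then the motion has unit speed: Σ_{i=1}^{n+1} (ẋ_i(t))² = 1 for every t ∈ I. -/

import Mathlib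

open Finset Polynomial

lemma lag_sum (s : Finset ℝ) (P : Polynomial ℝ) (hd : P.degree < s.card) :
    ∑ b ∈ s, P.eval b / ∏ c ∈ s.erase b, (b - c) = P.coeff (s.card - 1) := by
  have hinj : Set.InjOn (id : ℝ → ℝ) s := fun _ _ _ _ h => h
  have hP := Lagrange.eq_interpolate (v := id) hinj hd
  conv_rhs => rw [hP]
  rw [Lagrange.interpolate_apply, Polynomial.finset_sum_coeff]
  refine Finset.sum_congr rfl fun b hb => ?_
  have hbasis : Lagrange.basis s id b = C (∏ c ∈ s.erase b, (b - c)⁻¹) *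
      Lagrange.nodal (s.erase b) id := by
    unfold Lagrange.basis Lagrange.basisDivisor
    rw [Lagrange.nodal_eq, Finset.prod_mul_distrib]
    rw [map_prod]
    simp
  have hmono : (Lagrange.nodal (s.erase b) id).Monic := Lagrange.nodal_monic
  have hnd : (Lagrange.nodal (s.erase b) id).natDegree = s.card - 1 := by
    rw [Lagrange.natDegree_nodal, Finset.card_erase_of_mem hb]
  rw [hbasis, coeff_C_mul, coeff_C_mul, ← hnd, hmono.coeff_natDegree]
  rw [Finset.prod_inv_distrib, div_eq_mul_inv]
  simp

lemma lag_sum_fin {N : ℕ} (f : Fin N → ℝ) (hf : Function.Injective f) (P : Polynomial ℝ)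
    (hd : P.degree < (N : ℕ)) :
    ∑ i, P.eval (f i) / ∏ j ∈ univ.erase i, (f i - f j) = P.coeff (N - 1) := by
  have hcard : (Finset.image f univ).card = N := by
    rw [Finset.card_image_of_injective _ hf, Finset.card_univ, Fintype.card_fin]
  have := lag_sum (Finset.image f univ) P (by rwa [hcard])
  rw [hcard] at this
  rw [← this, Finset.sum_image (fun i _ j _ h => hf h)]
  refine Finset.sum_congr rfl fun i _ => ?_
  congr 1
  rw [← Finset.image_erase hf, Finset.prod_image (fun x _ y _ h => hf h)]

/-- Unit-speed normalization for solutions of the Dubrovin equations: with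
`xᵢ(t) = √ρᵢ(t)`, `wₖ² = −λₖ ∏ᵢ(λₖ−aᵢ) ∏ₗ(λₖ−cₗ)` and
`λ̇ₖ = −2wₖ / (λₖ ∏_{j≠k}(λₖ−λⱼ))`, one has `Σᵢ ẋᵢ² = 1`. -/
theorem dubrovin_unit_speed (n : ℕ) (hn : 1 ≤ n)
    (a : Fin (n + 1) → ℝ) (ha_pos : ∀ i, 0 < a i) (ha_inj : Function.Injective a)
    (c : Fin (n - 1) → ℝ)
    (p q : ℝ) (lam lamdot : Fin n → ℝ → ℝ) (w : Fin n → ℝ → ℝ)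
    (x xdot : Fin (n + 1) → ℝ → ℝ)
    (hlam_distinct : ∀ t ∈ Set.Ioo p q, ∀ k l : Fin n, k ≠ l → lam k t ≠ lam l t)
    (hlam_ne_a : ∀ t ∈ Set.Ioo p q, ∀ k : Fin n, ∀ j : Fin (n + 1), lam k t ≠ a j)
    (hlam_ne_zero : ∀ t ∈ Set.Ioo p q, ∀ k : Fin n, lam k t ≠ 0)
    (hrho_pos : ∀ t ∈ Set.Ioo p q, ∀ i : Fin (n + 1),
      0 < a i * (∏ k, (a i - lam k t)) / (∏ j ∈ univ.erase i, (a i - a j)))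
    (hx : ∀ t : ℝ, ∀ i : Fin (n + 1), x i t =
      Real.sqrt (a i * (∏ k, (a i - lam k t)) / (∏ j ∈ univ.erase i, (a i - a j))))
    (hlam_deriv : ∀ t ∈ Set.Ioo p q, ∀ k : Fin n, HasDerivAt (lam k) (lamdot k t) t)
    (hx_deriv : ∀ t ∈ Set.Ioo p q, ∀ i : Fin (n + 1), HasDerivAt (x i) (xdot i t) t)
    (hw : ∀ t ∈ Set.Ioo p q, ∀ k : Fin n,
      (w k t) ^ 2 = -(lam k t * (∏ i, (lam k t - a i)) * (∏ l, (lam k t - c l))))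
    (hdubrovin : ∀ t ∈ Set.Ioo p q, ∀ k : Fin n,
      lamdot k t = -2 * w k t / (lam k t * ∏ j ∈ univ.erase k, (lam k t - lam j t))) :
    ∀ t ∈ Set.Ioo p q, ∑ i, (xdot i t) ^ 2 = 1 := by
  intro t ht
  set L : Fin n → ℝ := fun k => lam k t with hLdef
  set Ld : Fin n → ℝ := fun k => lamdot k t with hLddef
  set D : Fin (n + 1) → ℝ := fun i => ∏ j ∈ univ.erase i, (a i - a j) with hDdef
  set N : Fin (n + 1) → ℝ := fun i => ∏ k, (a i - L k) with hNdef
  set P : Fin (n + 1) → Fin n → ℝ := fun i k => ∏ m ∈ univ.erase k, (a i - L m) with hPdef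
  have hD : ∀ i, D i ≠ 0 := fun i => Finset.prod_ne_zero_iff.2 fun j hj =>
    sub_ne_zero.2 fun h => (Finset.mem_erase.1 hj).1 (ha_inj h.symm)
  have haL : ∀ i k, a i - L k ≠ 0 := fun i k => sub_ne_zero.2 (hlam_ne_a t ht k i).symm
  have hN : ∀ i, N i ≠ 0 := fun i => Finset.prod_ne_zero_iff.2 fun k _ => haL i k
  have hP0 : ∀ i k, P i k ≠ 0 := fun i k => Finset.prod_ne_zero_iff.2 fun m _ => haL i m
  have ha0 : ∀ i, a i ≠ 0 := fun i => (ha_pos i).ne'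
  have hG : ∀ k, (∏ j ∈ univ.erase k, (L k - L j)) ≠ 0 := fun k =>
    Finset.prod_ne_zero_iff.2 fun j hj =>
      sub_ne_zero.2 (hlam_distinct t ht k j fun h => (Finset.mem_erase.1 hj).1 h.symm)
  have hM : ∀ k, (∏ j, (L k - a j)) ≠ 0 := fun k =>
    Finset.prod_ne_zero_iff.2 fun j _ => sub_ne_zero.2 (hlam_ne_a t ht k j)
  have hL0 : ∀ k, L k ≠ 0 := fun k => hlam_ne_zero t ht k
  -- the rho function and its derivative
  set rho : Fin (n + 1) → ℝ → ℝ := fun i s => a i * (∏ k, (a i - lam k s)) / D i with hrhodef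
  set rhod : Fin (n + 1) → ℝ := fun i => a i * (∑ k, P i k * (-(Ld k))) / D i with hrhoddef
  have hrho_t : ∀ i, rho i t = a i * N i / D i := fun i => rfl
  have hrpos : ∀ i, 0 < rho i t := fun i => hrho_pos t ht i
  have hrho_deriv : ∀ i, HasDerivAt (rho i) (rhod i) t := by
    intro i
    have h1 : ∀ k ∈ (univ : Finset (Fin n)),
        HasDerivAt (fun s => a i - lam k s) (-(lamdot k t)) t :=
      fun k _ => (hlam_deriv t ht k).const_sub _
    have h2 := ((HasDerivAt.finset_prod h1).const_mul (a i)).div_const (D i)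
    simp only [Finset.prod_apply, smul_eq_mul] at h2
    exact h2
  have hxd : ∀ i, xdot i t = rhod i / (2 * Real.sqrt (rho i t)) := by
    intro i
    have hs : HasDerivAt (fun s => Real.sqrt (rho i s)) (rhod i / (2 * Real.sqrt (rho i t))) t :=
      (hrho_deriv i).sqrt (hrpos i).ne'
    have hxe : x i = fun s => Real.sqrt (rho i s) := funext fun s => hx s i
    rw [← hxe] at hs
    exact (hx_deriv t ht i).unique hs
  have hxdsq : ∀ i, (xdot i t) ^ 2 = (rhod i) ^ 2 / (4 * rho i t) := by
    intro i
    rw [hxd i, div_pow, mul_pow, Real.sq_sqrt (hrpos i).le]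
    norm_num
  -- abbreviations for the algebra
  set G : Fin n → ℝ := fun k => ∏ j ∈ univ.erase k, (L k - L j) with hGdef
  set M : Fin n → ℝ := fun k => ∏ j, (L k - a j) with hMdef
  set S : Fin n → Fin n → ℝ := fun k l => ∑ i, a i * P i k * P i l / (N i * D i) with hSdef
  have stepA : ∀ i, (rhod i) ^ 2 / (4 * rho i t) =
      ∑ k, ∑ l, (Ld k * Ld l / 4) * (a i * P i k * P i l / (N i * D i)) := by
    intro i
    have h1 : (∑ k, P i k * (-(Ld k))) = -(∑ k, P i k * Ld k) := by
      rw [← Finset.sum_neg_distrib]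
      exact Finset.sum_congr rfl fun k _ => by ring
    calc (rhod i) ^ 2 / (4 * rho i t)
        = (∑ k, P i k * Ld k) ^ 2 * (a i / (4 * (N i * D i))) := by
          rw [hrho_t, show rhod i = a i * (∑ k, P i k * (-(Ld k))) / D i from rfl, h1]
          field_simp [ha0 i, hN i, hD i]
      _ = (∑ k, ∑ l, (P i k * Ld k) * (P i l * Ld l)) * (a i / (4 * (N i * D i))) := by
          rw [sq, Finset.sum_mul_sum]
      _ = ∑ k, ∑ l, (Ld k * Ld l / 4) * (a i * P i k * P i l / (N i * D i)) := by
          rw [Finset.sum_mul]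
          refine Finset.sum_congr rfl fun k _ => ?_
          rw [Finset.sum_mul]
          refine Finset.sum_congr rfl fun l _ => ?_
          ring
  have sum_eq : ∑ i, (xdot i t) ^ 2 = ∑ k, ∑ l, (Ld k * Ld l / 4) * S k l := by
    calc ∑ i, (xdot i t) ^ 2
        = ∑ i, ∑ k, ∑ l, (Ld k * Ld l / 4) * (a i * P i k * P i l / (N i * D i)) :=
          Finset.sum_congr rfl fun i _ => by rw [hxdsq i, stepA i]
      _ = ∑ k, ∑ i, ∑ l, (Ld k * Ld l / 4) * (a i * P i k * P i l / (N i * D i)) :=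
          Finset.sum_comm
      _ = ∑ k, ∑ l, ∑ i, (Ld k * Ld l / 4) * (a i * P i k * P i l / (N i * D i)) :=
          Finset.sum_congr rfl fun k _ => Finset.sum_comm
      _ = ∑ k, ∑ l, (Ld k * Ld l / 4) * S k l :=
          Finset.sum_congr rfl fun k _ => Finset.sum_congr rfl fun l _ =>
            (Finset.mul_sum _ _ _).symm
  -- Claim 1 : off-diagonal sums vanish
  have claim1 : ∀ k l : Fin n, k ≠ l → S k l = 0 := by
    intro k l hkl
    have hn2 : 2 ≤ n := by
      have h := Fintype.one_lt_card_iff_nontrivial.2 ⟨⟨k, l, hkl⟩⟩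
      simp [Fintype.card_fin] at h
      omega
    set u : Finset (Fin n) := (univ.erase k).erase l with hudef
    have hcu : u.card = n - 2 := by
      rw [hudef,
        Finset.card_erase_of_mem (Finset.mem_erase.2 ⟨fun h => hkl h.symm, mem_univ l⟩),
        Finset.card_erase_of_mem (mem_univ k), Finset.card_univ, Fintype.card_fin]
      omega
    set Q : Polynomial ℝ := X * Lagrange.nodal u L with hQdef
    have hQnd : Q.natDegree = n - 1 := by
      rw [hQdef, Polynomial.Monic.natDegree_mul monic_X Lagrange.nodal_monic,
        natDegree_X, Lagrange.natDegree_nodal, hcu]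
      omega
    have hdeg : Q.degree < ((n + 1 : ℕ) : WithBot ℕ) :=
      lt_of_le_of_lt Polynomial.degree_le_natDegree (Nat.cast_lt.2 (by omega))
    have hlag := lag_sum_fin a ha_inj Q hdeg
    have hcoeff : Q.coeff (n + 1 - 1) = 0 :=
      coeff_eq_zero_of_natDegree_lt (by omega)
    rw [hcoeff] at hlag
    rw [hSdef, ← hlag]
    refine Finset.sum_congr rfl fun i _ => ?_
    have hE : (∏ m ∈ u, (a i - L m)) ≠ 0 := Finset.prod_ne_zero_iff.2 fun m _ => haL i m
    have hPk : P i k = (a i - L l) * ∏ m ∈ u, (a i - L m) :=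
      (Finset.mul_prod_erase _ _ (Finset.mem_erase.2 ⟨fun h => hkl h.symm, mem_univ l⟩)).symm
    have hPl : P i l = (a i - L k) * ∏ m ∈ u, (a i - L m) := by
      rw [hPdef]
      rw [show u = (univ.erase l).erase k from Finset.erase_right_comm]
      exact (Finset.mul_prod_erase _ _ (Finset.mem_erase.2 ⟨hkl, mem_univ k⟩)).symm
    have hNi : N i = (a i - L k) * P i k :=
      (Finset.mul_prod_erase univ _ (mem_univ k)).symm
    have hev : Q.eval (a i) = a i * ∏ m ∈ u, (a i - L m) := by
      rw [hQdef, eval_mul, eval_X, Lagrange.eval_nodal]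
    rw [hev, hNi, hPl, hPk]
    have hD' : (∏ j ∈ univ.erase i, (a i - a j)) ≠ 0 := hD i
    field_simp [haL i k, haL i l, hE, hD i, hD']
    ring
  -- Claim 2 : diagonal sums
  have claim2 : ∀ k : Fin n, S k k = -(L k * G k) / M k := by
    intro k
    have hnotmem : L k ∉ Finset.image a univ := by
      simp only [Finset.mem_image, not_exists]
      exact fun j h => (hlam_ne_a t ht k j (h.2.symm)).elim
    set s' : Finset ℝ := insert (L k) (Finset.image a univ) with hs'def
    have hcard : s'.card = n + 2 := by
      rw [hs'def, Finset.card_insert_of_notMem hnotmem,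
        Finset.card_image_of_injective _ ha_inj, Finset.card_univ, Fintype.card_fin]
    set Q : Polynomial ℝ := X * Lagrange.nodal (univ.erase k) L with hQdef
    have hQnd : Q.natDegree = n := by
      rw [hQdef, Polynomial.Monic.natDegree_mul monic_X Lagrange.nodal_monic,
        natDegree_X, Lagrange.natDegree_nodal, Finset.card_erase_of_mem (mem_univ k),
        Finset.card_univ, Fintype.card_fin]
      omega
    have hdeg : Q.degree < (s'.card : WithBot ℕ) := by
      rw [hcard]
      exact lt_of_le_of_lt Polynomial.degree_le_natDegree (Nat.cast_lt.2 (by omega))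
    have hlag := lag_sum s' Q hdeg
    have hcoeff : Q.coeff (s'.card - 1) = 0 := by
      rw [hcard]; exact coeff_eq_zero_of_natDegree_lt (by omega)
    rw [hcoeff, Finset.sum_insert hnotmem] at hlag
    -- the term at the extra node L k
    have hterm : Q.eval (L k) / ∏ b ∈ s'.erase (L k), (L k - b) = L k * G k / M k := by
      rw [hs'def, Finset.erase_insert hnotmem,
        Finset.prod_image (fun x _ y _ h => ha_inj h)]
      rw [hQdef, eval_mul, eval_X, Lagrange.eval_nodal]
    -- the sum over the a-nodes
    have hsum : ∑ b ∈ Finset.image a univ, Q.eval b / ∏ c ∈ s'.erase b, (b - c) = S k k := by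
      rw [Finset.sum_image (fun x _ y _ h => ha_inj h)]
      refine Finset.sum_congr rfl fun i _ => ?_
      have h1 : s'.erase (a i) = insert (L k) ((Finset.image a univ).erase (a i)) := by
        rw [hs'def, Finset.erase_insert_of_ne (fun h => haL i k (sub_eq_zero.2 h.symm))]
      have h2 : L k ∉ (Finset.image a univ).erase (a i) :=
        fun h => hnotmem (Finset.mem_of_mem_erase h)
      have h3 : ∏ c ∈ (Finset.image a univ).erase (a i), (a i - c) = D i := by
        rw [← Finset.image_erase ha_inj, Finset.prod_image (fun x _ y _ h => ha_inj h)]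
      rw [h1, Finset.prod_insert h2, h3]
      have hev : Q.eval (a i) = a i * P i k := by
        rw [hQdef, eval_mul, eval_X, Lagrange.eval_nodal]
      have hNi : N i = (a i - L k) * P i k :=
        (Finset.mul_prod_erase univ _ (mem_univ k)).symm
      rw [hev, hNi]
      field_simp [haL i k, hP0 i k, hD i]
    rw [hterm, hsum] at hlag
    rw [hSdef] at *
    rw [neg_div]
    linarith [hlag]
  -- put everything together
  have diag : ∑ k, ∑ l, (Ld k * Ld l / 4) * S k l = ∑ k, (Ld k * Ld k / 4) * S k k :=
    Finset.sum_congr rfl fun k _ =>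
      Finset.sum_eq_single k
        (fun l _ hlk => by rw [claim1 k l (fun h => hlk h.symm), mul_zero])
        (fun h => absurd (mem_univ k) h)
  have term_eq : ∀ k, (Ld k * Ld k / 4) * S k k = (∏ l, (L k - c l)) / G k := by
    intro k
    have hld : Ld k = -2 * w k t / (L k * G k) := hdubrovin t ht k
    have hw2 : (w k t) ^ 2 = -(L k * M k * (∏ l, (L k - c l))) := hw t ht k
    have h1 : Ld k * Ld k = 4 * (w k t) ^ 2 / (L k * G k) ^ 2 := by
      rw [hld]
      field_simp
      ring
    rw [claim2 k, h1, hw2]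
    field_simp [hL0 k, hG k, hM k, (show M k ≠ 0 from hM k), (show G k ≠ 0 from hG k)]
  rw [sum_eq, diag]
  rw [Finset.sum_congr rfl fun k _ => term_eq k]
  -- Claim 3 : the final interpolation identity
  have hLinj : Function.Injective L := by
    intro k l h
    by_contra hkl
    exact hlam_distinct t ht k l hkl h
  set Q : Polynomial ℝ := Lagrange.nodal univ c with hQdef
  have hQnd : Q.natDegree = n - 1 := by
    rw [hQdef, Lagrange.natDegree_nodal, Finset.card_univ, Fintype.card_fin]
  have hdeg : Q.degree < ((n : ℕ) : WithBot ℕ) :=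
    lt_of_le_of_lt Polynomial.degree_le_natDegree (Nat.cast_lt.2 (by omega))
  have hlag := lag_sum_fin L hLinj Q hdeg
  have hcoeff : Q.coeff (n - 1) = 1 := by
    rw [← hQnd]
    exact Lagrange.nodal_monic.coeff_natDegree
  rw [hcoeff] at hlag
  rw [← hlag]
  refine Finset.sum_congr rfl fun k _ => ?_
  rw [hQdef, Lagrange.eval_nodal]
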